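/- For N ≥ 4 and z ≠ 0, the state X_N(z) = |1⟩^⊗N + z^{N-1} √N · W_N has optimal bond dimension exactly N-1; explicitly, X_N(z) = (1/(N-1)) ∑_{k=1}^{N-1} (|1⟩ + e^{2πi(k-1)/(N-1)} z |0⟩)^⊗N, and it cannot be written as a sum of N-2 or fewer tensor powers of qubit vectors. -/

import Mathlib

open scoped BigOperators

/-- The `N`-fold tensor power of a qubit vector `x : Fin 2 → ℂ`, written as a
coefficient tensor on `(Fin N → Fin 2)`. -/
def tpow (x : Fin 2 → ℂ) (N : ℕ) : (Fin N → Fin 2) → ℂ :=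
  fun f => ∏ i, x (f i)

/-- A state of `N` qubits is symmetric if it is invariant under every
permutation of the tensor factors. -/
def IsSymmetricState {N : ℕ} (ψ : (Fin N → Fin 2) → ℂ) : Prop :=
  ∀ σ : Equiv.Perm (Fin N), ∀ f : Fin N → Fin 2, ψ (f ∘ σ) = ψ f

/-- A family of qubit vectors is pairwise linearly independent if every two
distinct members are linearly independent. -/
def PairwiseLinIndep {D : ℕ} (x : Fin D → Fin 2 → ℂ) : Prop :=
  ∀ k l : Fin D, k ≠ l → LinearIndependent ℂ ![x k, x l]

/-- Optimal bond dimension: the minimal `D` such that `ψ` is a sum of `D`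
`N`-fold tensor powers of qubit vectors. -/
noncomputable def bondDim {N : ℕ} (ψ : (Fin N → Fin 2) → ℂ) : ℕ :=
  sInf {D | ∃ x : Fin D → Fin 2 → ℂ, ψ = ∑ k : Fin D, tpow (x k) N}

/-- Standard basis vector `|0⟩` of `ℂ²`. -/
def e0 : Fin 2 → ℂ := fun i => if i = 0 then 1 else 0

/-- Standard basis vector `|1⟩` of `ℂ²`. -/
def e1 : Fin 2 → ℂ := fun i => if i = 1 then 1 else 0

/-- The GHZ state of `N` qubits. -/
noncomputable def GHZ (N : ℕ) : (Fin N → Fin 2) → ℂ :=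
  (1 / (Real.sqrt 2 : ℂ)) • (tpow e0 N + tpow e1 N)

/-- The W state of `N` qubits. -/
noncomputable def Wstate (N : ℕ) : (Fin N → Fin 2) → ℂ :=
  fun f => (1 / (Real.sqrt N : ℂ)) *
    ∑ j : Fin N, ∏ i : Fin N, (if i = j then e1 (f i) else e0 (f i))

/-- Tensor product of an `M`-qubit tensor and an `L`-qubit tensor. -/
def otimes {M L : ℕ} (ξ : (Fin M → Fin 2) → ℂ) (χ : (Fin L → Fin 2) → ℂ) :
    (Fin (M + L) → Fin 2) → ℂ :=
  fun f => ξ (fun i => f (Fin.castAdd L i)) * χ (fun j => f (Fin.natAdd M j))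

/-- Schmidt rank of an `(M, L)`-bipartite state: the minimal number of product
terms needed to express it. -/
noncomputable def schmidtRank {M L : ℕ} (ψ : (Fin (M + L) → Fin 2) → ℂ) : ℕ :=
  sInf {s | ∃ ξ : Fin s → (Fin M → Fin 2) → ℂ, ∃ χ : Fin s → (Fin L → Fin 2) → ℂ,
    ψ = ∑ k : Fin s, otimes (ξ k) (χ k)}

/-- Reduced density matrix of the first `M` qubits of an `(M + L)`-qubit state,
obtained by tracing out the last `L` qubits. -/
noncomputable def rdm (M L : ℕ) (ψ : (Fin (M + L) → Fin 2) → ℂ) :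
    Matrix (Fin M → Fin 2) (Fin M → Fin 2) ℂ :=
  Matrix.of fun a b => ∑ g : Fin L → Fin 2, ψ (Fin.append a g) * star (ψ (Fin.append b g))

section AuxX
open Finset

lemma fin2_eq (v : Fin 2) : v = 0 ∨ v = 1 := by omega

/-- number of zeros -/
def czero {N : ℕ} (f : Fin N → Fin 2) : ℕ := #(univ.filter fun i => f i = 0)

lemma czero_le {N : ℕ} (f : Fin N → Fin 2) : czero f ≤ N := by
  classical
  calc czero f ≤ #(univ : Finset (Fin N)) := card_filter_le _ _
  _ = N := by simp

lemma tpow_eval {N : ℕ} (x : Fin 2 → ℂ) (f : Fin N → Fin 2) :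
    tpow x N f = x 0 ^ czero f * x 1 ^ (N - czero f) := by
  classical
  unfold tpow czero
  rw [← Finset.prod_filter_mul_prod_filter_not Finset.univ (fun i => f i = 0)]
  congr 1
  · rw [Finset.prod_congr rfl (fun i hi => by rw [(mem_filter.mp hi).2]), Finset.prod_const]
  · rw [Finset.prod_congr rfl (fun i hi => ?_), Finset.prod_const]
    · congr 1
      have := Finset.card_filter_add_card_filter_not (s := (univ : Finset (Fin N)))
        (p := fun i => f i = 0)
      simp only [card_univ, Fintype.card_fin] at this
      omega
    · have h2 := (mem_filter.mp hi).2
      rcases fin2_eq (f i) with h | h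
      · exact absurd h h2
      · rw [h]

lemma card_ones {N : ℕ} (f : Fin N → Fin 2) :
    #(univ.filter fun i => f i = 1) = N - czero f := by
  classical
  have h1 : (univ.filter fun i : Fin N => f i = 1) = (univ.filter fun i => ¬ (f i = 0)) := by
    apply filter_congr; intro i _
    rcases fin2_eq (f i) with h | h <;> simp [h]
  have := Finset.card_filter_add_card_filter_not (s := (univ : Finset (Fin N)))
    (p := fun i => f i = 0)
  simp only [card_univ, Fintype.card_fin] at this
  unfold czero
  rw [h1]
  omega

lemma card_delta {N : ℕ} (hN : 2 ≤ N) (f : Fin N → Fin 2) :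
    #(univ.filter fun j : Fin N => ∀ i, f i = if i = j then 1 else 0) =
      if czero f = N - 1 then 1 else 0 := by
  classical
  split_ifs with h
  · have hone : #(univ.filter fun i : Fin N => f i = 1) = 1 := by
      rw [card_ones, h]; omega
    obtain ⟨j0, hj0⟩ := card_eq_one.mp hone
    have hfj0 : f j0 = 1 := by
      have : j0 ∈ univ.filter fun i : Fin N => f i = 1 := by rw [hj0]; exact mem_singleton_self _
      exact (mem_filter.mp this).2
    have : (univ.filter fun j : Fin N => ∀ i, f i = if i = j then 1 else 0) = {j0} := by
      ext j
      simp only [mem_filter, mem_univ, true_and, mem_singleton]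
      constructor
      · intro hd
        have : f j = 1 := by have := hd j; simpa using this
        have : j ∈ univ.filter fun i : Fin N => f i = 1 := by simp [this]
        rw [hj0] at this; exact mem_singleton.mp this
      · rintro rfl
        intro i
        by_cases hij : i = j
        · simp [hij, hfj0]
        · simp only [if_neg hij]
          rcases fin2_eq (f i) with h' | h'
          · exact h'
          · exfalso
            have : i ∈ univ.filter fun i : Fin N => f i = 1 := by simp [h']
            rw [hj0] at this
            exact hij (mem_singleton.mp this)
    rw [this, card_singleton]
  · have : (univ.filter fun j : Fin N => ∀ i, f i = if i = j then 1 else 0) = ∅ := by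
      rw [filter_eq_empty_iff]
      intro j _
      intro hd
      apply h
      have : (univ.filter fun i : Fin N => f i = 0) = univ.erase j := by
        ext i
        simp only [mem_filter, mem_univ, true_and, mem_erase, and_true]
        constructor
        · intro h0
          intro hij; rw [hij, hd j] at h0; simp at h0
        · intro hij
          rw [hd i, if_neg hij]
      unfold czero
      rw [this, card_erase_of_mem (mem_univ _), card_univ, Fintype.card_fin]
    rw [this, card_empty]

lemma psi_eval {N : ℕ} (hN : 4 ≤ N) (z : ℂ) (f : Fin N → Fin 2) :
    (tpow e1 N + (z ^ (N - 1) * (Real.sqrt N : ℂ)) • Wstate N) f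
      = (if czero f = 0 then 1 else 0) + z ^ (N - 1) * (if czero f = N - 1 then 1 else 0) := by
  classical
  have hsqrt : (Real.sqrt N : ℂ) ≠ 0 := by
    simp only [ne_eq, Complex.ofReal_eq_zero]
    positivity
  have h1 : tpow e1 N f = if czero f = 0 then 1 else 0 := by
    rw [tpow_eval]
    have he0 : e1 0 = 0 := by simp [e1]
    have he1 : e1 1 = 1 := by simp [e1]
    rw [he0, he1, one_pow, mul_one, zero_pow_eq]
  have h2 : Wstate N f = (1 / (Real.sqrt N : ℂ)) * (if czero f = N - 1 then 1 else 0) := by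
    unfold Wstate
    congr 1
    have hterm : ∀ j : Fin N, (∏ i, (if i = j then e1 (f i) else e0 (f i)))
        = if (∀ i, f i = if i = j then 1 else 0) then 1 else 0 := by
      intro j
      calc (∏ i, (if i = j then e1 (f i) else e0 (f i)))
          = ∏ i, (if f i = (if i = j then 1 else 0) then (1:ℂ) else 0) := by
            apply Finset.prod_congr rfl
            intro i _
            by_cases hij : i = j <;> rcases fin2_eq (f i) with h | h <;>
              simp [hij, h, e0, e1]
        _ = if (∀ i, f i = if i = j then 1 else 0) then 1 else 0 := by rw [Fintype.prod_boole]; convert rfl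
    rw [Finset.sum_congr rfl (fun j _ => hterm j), Finset.sum_boole, card_delta (by omega) f]
    split <;> simp
  rw [Pi.add_apply, Pi.smul_apply, h1, h2, smul_eq_mul]
  split_ifs <;> field_simp <;> ring


lemma geom_aux {N : ℕ} (hN : 4 ≤ N) (c : ℕ) (hc : c ≤ N) :
    ∑ k : Fin (N-1), Complex.exp (2 * (Real.pi : ℂ) * Complex.I * ((k : ℕ) : ℂ) / ((N : ℂ) - 1)) ^ c
      = if c = 0 ∨ c = N - 1 then ((N:ℂ) - 1) else 0 := by
  have hcast : ((N:ℂ) - 1) = ((N - 1 : ℕ) : ℂ) := by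
    push_cast [Nat.cast_sub (by omega : 1 ≤ N)]; ring
  have hNC : ((N:ℂ) - 1) ≠ 0 := by
    rw [hcast]
    simp only [ne_eq, Nat.cast_eq_zero]
    omega
  set ω : ℂ := Complex.exp (2 * (Real.pi : ℂ) * Complex.I / ((N : ℂ) - 1)) with hω
  have hterm : ∀ k : Fin (N-1),
      Complex.exp (2 * (Real.pi : ℂ) * Complex.I * ((k : ℕ) : ℂ) / ((N : ℂ) - 1)) = ω ^ (k : ℕ) := by
    intro k
    rw [hω, ← Complex.exp_nat_mul]
    congr 1
    ring
  have homega : ω ^ (N - 1) = 1 := by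
    rw [hω, ← Complex.exp_nat_mul, ← hcast]
    rw [mul_div_assoc']
    rw [mul_comm ((N:ℂ)-1)]
    rw [mul_div_assoc, div_self hNC, mul_one]
    exact Complex.exp_two_pi_mul_I
  simp only [hterm]
  have hpow : ∀ k : Fin (N-1), (ω ^ (k:ℕ)) ^ c = (ω ^ c) ^ (k:ℕ) := by
    intro k; rw [← pow_mul, ← pow_mul, Nat.mul_comm]
  simp only [hpow]
  rw [Fin.sum_univ_eq_sum_range (fun k => (ω ^ c) ^ k)]
  by_cases hr : ω ^ c = 1
  · rw [hr]
    simp only [one_pow, Finset.sum_const, card_range, nsmul_eq_mul, mul_one]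
    rw [← hcast]
    -- show the condition holds
    have : c = 0 ∨ c = N - 1 := by
      have : Complex.exp ((c : ℂ) * (2 * (Real.pi : ℂ) * Complex.I / ((N : ℂ) - 1))) = 1 := by
        rw [Complex.exp_nat_mul]; exact hr
      rw [Complex.exp_eq_one_iff] at this
      obtain ⟨n, hn⟩ := this
      have h2pi : (2 * (Real.pi : ℂ) * Complex.I) ≠ 0 := by
        simp [Complex.I_ne_zero, Real.pi_ne_zero, Complex.ofReal_ne_zero]
      have hcn : (c : ℂ) = (n : ℂ) * ((N:ℂ) - 1) := by
        field_simp at hn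
        apply mul_right_cancel₀ h2pi
        linear_combination (2 * (Real.pi : ℂ) * Complex.I) * hn
      rw [hcast] at hcn
      have hint : (c : ℤ) = n * ((N:ℤ) - 1) := by
        have : ((c : ℤ) : ℂ) = ((n * ((N:ℤ) - 1) : ℤ) : ℂ) := by
          push_cast [Nat.cast_sub (show 1 ≤ N by omega)] at hcn ⊢
          linear_combination hcn
        exact_mod_cast this
      have hc0 : (0:ℤ) ≤ (c:ℤ) := Int.ofNat_nonneg c
      have hcN : (c:ℤ) ≤ (N:ℤ) := by exact_mod_cast hc
      have hN4 : (4:ℤ) ≤ (N:ℤ) := by exact_mod_cast hN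
      have hn01 : n = 0 ∨ n = 1 := by
        rcases lt_trichotomy n 0 with h | h | h
        · exfalso; nlinarith
        · left; exact h
        · by_contra hne
          push_neg at hne
          have h2 : 2 ≤ n := by omega
          nlinarith
      rcases hn01 with rfl | rfl
      · left; omega
      · right; omega
    rw [if_pos this]
  · have hc0 : ¬ (c = 0 ∨ c = N - 1) := by
      rintro (rfl | rfl)
      · exact hr (pow_zero ω)
      · exact hr homega
    rw [if_neg hc0]
    rw [geom_sum_eq hr]
    have : (ω ^ c) ^ (N - 1) = 1 := by
      rw [← pow_mul, Nat.mul_comm, pow_mul, homega, one_pow]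
    rw [this, sub_self, zero_div]

lemma identity_X {N : ℕ} (hN : 4 ≤ N) (z : ℂ) (hz : z ≠ 0) :
    (tpow e1 N + (z ^ (N - 1) * (Real.sqrt N : ℂ)) • Wstate N) =
        ((1 : ℂ) / ((N : ℂ) - 1)) • ∑ k : Fin (N - 1), tpow
          (fun i : Fin 2 => if i = 1 then 1 else
            Complex.exp (2 * (Real.pi : ℂ) * Complex.I * (k : ℕ) / ((N : ℂ) - 1)) * z) N := by
  classical
  have hNC : ((N:ℂ) - 1) ≠ 0 := by
    have : ((N:ℂ) - 1) = ((N - 1 : ℕ) : ℂ) := by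
      push_cast [Nat.cast_sub (by omega : 1 ≤ N)]; ring
    rw [this]
    simp only [ne_eq, Nat.cast_eq_zero]
    omega
  funext f
  rw [psi_eval hN z f]
  rw [Pi.smul_apply, Finset.sum_apply, smul_eq_mul]
  have hterm : ∀ k : Fin (N-1),
      tpow (fun i : Fin 2 => if i = 1 then 1 else
          Complex.exp (2 * (Real.pi : ℂ) * Complex.I * (k : ℕ) / ((N : ℂ) - 1)) * z) N f
        = Complex.exp (2 * (Real.pi : ℂ) * Complex.I * ((k:ℕ):ℂ) / ((N : ℂ) - 1)) ^ (czero f)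
            * z ^ (czero f) := by
    intro k
    rw [tpow_eval]
    norm_num
    rw [mul_pow]
  rw [Finset.sum_congr rfl (fun k _ => hterm k), ← Finset.sum_mul]
  rw [geom_aux hN (czero f) (czero_le f)]
  by_cases h0 : czero f = 0
  · rw [h0]
    have hne : ¬ ((0:ℕ) = N - 1) := by omega
    norm_num [hne]
    field_simp
  · by_cases h1 : czero f = N - 1
    · rw [h1]
      have hne : ¬ (N - 1 = 0) := by omega
      norm_num [hne]
      field_simp
    · rw [if_neg h0, if_neg h1, if_neg (by tauto)]
      ring

/-- configuration with `m` zeros -/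
def fm (N m : ℕ) : Fin N → Fin 2 := fun i => if (i : ℕ) < m then 0 else 1

lemma czero_fm {N m : ℕ} (h : m ≤ N) : czero (fm N m) = m := by
  classical
  have hfil : (univ.filter fun i : Fin N => fm N m i = 0)
      = (univ.filter fun i : Fin N => (i : ℕ) < m) := by
    apply filter_congr
    intro i _
    unfold fm
    split_ifs with h' <;> simp [h']
  unfold czero
  rw [hfil]
  rcases eq_or_lt_of_le h with rfl | hlt
  · rw [Finset.filter_true_of_mem (fun i _ => i.isLt)]
    simp
  · have : (univ.filter fun i : Fin N => (i : ℕ) < m) = Finset.Iio (⟨m, hlt⟩ : Fin N) := by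
      ext i
      simp [Finset.mem_Iio, Fin.lt_def]
    rw [this, Fin.card_Iio]

lemma lower_bound {N : ℕ} (hN : 4 ≤ N) {z : ℂ} (hz : z ≠ 0) {D : ℕ}
    (x : Fin D → Fin 2 → ℂ)
    (h : (tpow e1 N + (z ^ (N - 1) * (Real.sqrt N : ℂ)) • Wstate N)
      = ∑ k : Fin D, tpow (x k) N) :
    N - 1 ≤ D := by
  classical
  by_contra hD
  push_neg at hD
  set a : Fin D → ℂ := fun k => x k 0 with ha
  set b : Fin D → ℂ := fun k => x k 1 with hb
  have hs : ∀ m : ℕ, m ≤ N → ∑ k, a k ^ m * b k ^ (N - m)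
      = (if m = 0 then 1 else 0) + z ^ (N - 1) * (if m = N - 1 then 1 else 0) := by
    intro m hm
    have hcf := congrFun h (fm N m)
    rw [psi_eval hN z (fm N m), czero_fm hm, Finset.sum_apply] at hcf
    rw [hcf]
    apply Finset.sum_congr rfl
    intro k _
    rw [tpow_eval (x k) (fm N m), czero_fm hm]
  set S1 : Finset (Fin D) := univ.filter (fun k => b k ≠ 0) with hS1
  set p : ℕ := #S1 with hp
  have hpS1 : p = #S1 := hp
  have hpD : p ≤ D := by
    calc p ≤ #(univ : Finset (Fin D)) := card_filter_le _ _
    _ = D := by simp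
  have hpN : p ≤ N - 2 := by omega
  set P : Polynomial ℂ := ∏ k ∈ S1, (Polynomial.X - Polynomial.C (a k / b k)) with hP
  have hmonic : P.Monic := Polynomial.monic_prod_of_monic _ _
    (fun k _ => Polynomial.monic_X_sub_C _)
  have hdeg : P.natDegree = p := by
    rw [hP, Polynomial.natDegree_prod _ _ (fun k _ => Polynomial.X_sub_C_ne_zero _)]
    simp [Polynomial.natDegree_X_sub_C, hpS1]
  have hroot : ∀ k : Fin D, b k ≠ 0 → P.eval (a k / b k) = 0 := by
    intro k hbk
    have hkS : k ∈ S1 := by rw [hS1]; simp [hbk]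
    rw [hP, Polynomial.eval_prod]
    apply Finset.prod_eq_zero hkS
    simp
  clear_value P
  clear hp
  clear_value p
  clear hP hS1 hpS1
  -- key: each k contributes 0
  have key : ∀ k : Fin D,
      ∑ i ∈ Finset.range (p+1), P.coeff i * a k ^ (N-1-p+i) * b k ^ (N - (N-1-p+i)) = 0 := by
    intro k
    by_cases hbk : b k = 0
    · apply Finset.sum_eq_zero
      intro i hi
      have hi' : i ≤ p := by simpa [Nat.lt_succ_iff] using hi
      have : N - (N-1-p+i) ≠ 0 := by omega
      rw [hbk, zero_pow this, mul_zero]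
    · have heval : ∑ i ∈ Finset.range (p+1), P.coeff i * (a k / b k) ^ i = 0 := by
        have hev := Polynomial.eval_eq_sum_range (p := P) (a k / b k)
        rw [hdeg] at hev
        rw [← hev]
        exact hroot k hbk
      calc ∑ i ∈ Finset.range (p+1), P.coeff i * a k ^ (N-1-p+i) * b k ^ (N - (N-1-p+i))
          = ∑ i ∈ Finset.range (p+1),
            (a k ^ (N-1-p) * b k ^ (p+1) * (P.coeff i * (a k / b k) ^ i)) := by
            apply Finset.sum_congr rfl
            intro i hi
            have hi' : i ≤ p := by simpa [Nat.lt_succ_iff] using hi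
            have h2 : N - (N-1-p+i) = (p+1) - i := by omega
            have e1 : a k ^ (N-1-p+i) = a k ^ (N-1-p) * a k ^ i := by rw [← pow_add]
            have e2 : b k ^ (p+1) = b k ^ (p+1-i) * b k ^ i := by
              rw [← pow_add]
              congr 1
              omega
            rw [h2, e1, e2, div_pow]
            have hbp : b k ^ i ≠ 0 := pow_ne_zero _ hbk
            field_simp
        _ = a k ^ (N-1-p) * b k ^ (p+1) *
              ∑ i ∈ Finset.range (p+1), P.coeff i * (a k / b k) ^ i := by
            rw [Finset.mul_sum]
        _ = 0 := by rw [heval, mul_zero]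
  -- evaluate the combination two ways
  have hE : ∑ i ∈ Finset.range (p+1), P.coeff i *
      ((if N-1-p+i = 0 then (1:ℂ) else 0) + z ^ (N - 1) * (if N-1-p+i = N - 1 then 1 else 0))
      = 0 := by
    have : ∀ i ∈ Finset.range (p+1),
        P.coeff i * ((if N-1-p+i = 0 then (1:ℂ) else 0)
          + z ^ (N - 1) * (if N-1-p+i = N - 1 then 1 else 0))
        = P.coeff i * ∑ k, a k ^ (N-1-p+i) * b k ^ (N - (N-1-p+i)) := by
      intro i hi
      have hi' : i ≤ p := by simpa [Nat.lt_succ_iff] using hi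
      rw [hs (N-1-p+i) (by omega)]
    rw [Finset.sum_congr rfl this]
    simp_rw [Finset.mul_sum]
    rw [Finset.sum_comm]
    rw [Finset.sum_congr rfl (fun k _ => ?_)]
    · exact Finset.sum_const_zero
    · simp_rw [← mul_assoc]
      exact key k
  have hE2 : ∑ i ∈ Finset.range (p+1), P.coeff i *
      ((if N-1-p+i = 0 then (1:ℂ) else 0) + z ^ (N - 1) * (if N-1-p+i = N - 1 then 1 else 0))
      = z ^ (N-1) := by
    rw [Finset.sum_eq_single_of_mem p (Finset.self_mem_range_succ p)]
    · have h1 : ¬ (N-1-p+p = 0) := by omega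
      have h2 : N-1-p+p = N-1 := by omega
      rw [if_neg h1, h2, if_pos rfl]
      have : P.coeff p = 1 := by
        have := hmonic.coeff_natDegree
        rwa [hdeg] at this
      rw [this]
      ring
    · intro i hi hne
      have hi' : i ≤ p := by simpa [Nat.lt_succ_iff] using hi
      have h1 : ¬ (N-1-p+i = 0) := by omega
      have h2 : ¬ (N-1-p+i = N-1) := by omega
      rw [if_neg h1, if_neg h2]
      ring
  rw [hE] at hE2
  exact (pow_ne_zero _ hz) hE2.symm

lemma tpow_smul {N : ℕ} (c : ℂ) (y : Fin 2 → ℂ) :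
    tpow (c • y) N = fun f => c ^ N * tpow y N f := by
  funext f
  simp only [tpow, Pi.smul_apply, smul_eq_mul]
  rw [Finset.prod_mul_distrib, Finset.prod_const, card_univ, Fintype.card_fin]


/-- for `N ≥ 4` and `z ≠ 0`, the state
`X_N(z) = |1⟩^{⊗N} + z^{N-1} √N W_N` equals
`(1/(N-1)) ∑_{k=1}^{N-1} (|1⟩ + e^{2πi(k-1)/(N-1)} z |0⟩)^{⊗N}` and has optimal
bond dimension exactly `N-1`. -/
theorem bondDim_X (N : ℕ) (hN : 4 ≤ N) (z : ℂ) (hz : z ≠ 0) :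
    (tpow e1 N + (z ^ (N - 1) * (Real.sqrt N : ℂ)) • Wstate N) =
        ((1 : ℂ) / ((N : ℂ) - 1)) • ∑ k : Fin (N - 1), tpow
          (fun i : Fin 2 => if i = 1 then 1 else
            Complex.exp (2 * (Real.pi : ℂ) * Complex.I * (k : ℕ) / ((N : ℂ) - 1)) * z) N ∧
      bondDim (tpow e1 N + (z ^ (N - 1) * (Real.sqrt N : ℂ)) • Wstate N) = N - 1 := by
  classical
  refine ⟨identity_X hN z hz, ?_⟩
  have hmem : (N - 1) ∈ {D | ∃ x : Fin D → Fin 2 → ℂ,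
      (tpow e1 N + (z ^ (N - 1) * (Real.sqrt N : ℂ)) • Wstate N)
        = ∑ k : Fin D, tpow (x k) N} := by
    set c : ℂ := (1 / ((N:ℂ) - 1)) ^ (((N:ℕ) : ℂ)⁻¹) with hc
    have hcN : c ^ N = 1 / ((N:ℂ) - 1) :=
      Complex.cpow_nat_inv_pow _ (show N ≠ 0 by omega)
    refine ⟨fun k => c • (fun i : Fin 2 => if i = 1 then 1 else
      Complex.exp (2 * (Real.pi : ℂ) * Complex.I * (k : ℕ) / ((N : ℂ) - 1)) * z), ?_⟩
    rw [identity_X hN z hz, Finset.smul_sum]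
    apply Finset.sum_congr rfl
    intro k _
    rw [tpow_smul, hcN]
    funext f
    simp
  unfold bondDim
  apply le_antisymm
  · exact Nat.sInf_le hmem
  · apply le_csInf ⟨_, hmem⟩
    rintro D ⟨x, hx⟩
    exact lower_bound hN hz x hx

end AuxX
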